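/- For every metric space X the following conditions are equivalent: (a) for each r > 0 there is a uniformly bounded cover 𝒰 of X such that every ball B(x,r) intersects only finitely many elements of 𝒰; (b) X is large scale weakly paracompact; (c) for every uniformly bounded cover 𝒰 of X there exists а uniformly bounded point-finite cover 𝒱 of X such that 𝒰 is a refinement of 𝒱. -/

import Mathlib

/-- `𝒰` is a cover of `X`. -/
def IsCover {X : Type*} (𝒰 : Set (Set X)) : Prop := ∀ x : X, ∃ U ∈ 𝒰, x ∈ U

/-- `𝒰` is uniformly bounded: there is `M > 0` bounding the diameters of all members. -/
def UnifBounded {X : Type*} [MetricSpace X] (𝒰 : Set (Set X)) : Prop :=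
  ∃ M : ℝ, 0 < M ∧ ∀ U ∈ 𝒰, EMetric.diam U ≤ ENNReal.ofReal M

/-- The Lebesgue number of `𝒰` is at least `s`: every ball `B(x,s)` is contained in some
member of `𝒰`. -/
def LebesgueAtLeast {X : Type*} [MetricSpace X] (s : ℝ) (𝒰 : Set (Set X)) : Prop :=
  ∀ x : X, ∃ U ∈ 𝒰, Metric.ball x s ⊆ U

/-- `𝒰` is point-finite: every point belongs to only finitely many members. -/
def PointFinite {X : Type*} (𝒰 : Set (Set X)) : Prop :=
  ∀ x : X, {U ∈ 𝒰 | x ∈ U}.Finite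

/-- `X` is large scale weakly paracompact: for each `r, s > 0` there is a uniformly bounded
cover of Lebesgue number at least `s` such that every `r`-ball is contained in only finitely
many of its members. -/
def LSWeaklyParacompact (X : Type*) [MetricSpace X] : Prop :=
  ∀ r > (0:ℝ), ∀ s > (0:ℝ), ∃ 𝒰 : Set (Set X), IsCover 𝒰 ∧ UnifBounded 𝒰 ∧
    LebesgueAtLeast s 𝒰 ∧ ∀ x : X, {U ∈ 𝒰 | Metric.ball x r ⊆ U}.Finite

/-- Proposition 3.2. For a metric space `X` the following are equivalent:
(a) for each `r > 0` there is a uniformly bounded cover such that every `r`-ball intersects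
only finitely many of its members; (b) `X` is large scale weakly paracompact;
(c) every uniformly bounded cover refines a uniformly bounded point-finite cover. -/
theorem stmt1 {X : Type*} [MetricSpace X] :
    List.TFAE
      [∀ r > (0:ℝ), ∃ 𝒰 : Set (Set X), IsCover 𝒰 ∧ UnifBounded 𝒰 ∧
          ∀ x : X, {U ∈ 𝒰 | (Metric.ball x r ∩ U).Nonempty}.Finite,
        LSWeaklyParacompact X,
        ∀ 𝒰 : Set (Set X), IsCover 𝒰 → UnifBounded 𝒰 →
          ∃ 𝒱 : Set (Set X), IsCover 𝒱 ∧ UnifBounded 𝒱 ∧ PointFinite 𝒱 ∧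
            ∀ U ∈ 𝒰, ∃ V ∈ 𝒱, U ⊆ V] := by
  tfae_have 1 → 2 := by
    intro h r hr s hs
    obtain ⟨𝒰, hcov, ⟨M, hM, hbd⟩, hfin⟩ := h (r + s) (by positivity)
    refine ⟨Metric.thickening s '' 𝒰, ?_, ⟨M + 2 * s, by positivity, ?_⟩, ?_, ?_⟩
    · intro x
      obtain ⟨U, hU, hx⟩ := hcov x
      exact ⟨_, Set.mem_image_of_mem _ hU, Metric.self_subset_thickening hs U hx⟩
    · rintro V ⟨U, hU, rfl⟩
      calc EMetric.diam (Metric.thickening s U)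
          ≤ EMetric.diam U + 2 * (s.toNNReal : ENNReal) := by
            have : Metric.thickening s U = Metric.thickening (s.toNNReal : ℝ) U := by
              rw [Real.coe_toNNReal s hs.le]
            rw [this]
            exact Metric.ediam_thickening_le _
        _ ≤ ENNReal.ofReal M + 2 * ENNReal.ofReal s := by
            gcongr
            · exact hbd U hU
            · rw [ENNReal.ofReal]
        _ = ENNReal.ofReal (M + 2 * s) := by
            rw [ENNReal.ofReal_add hM.le (by positivity), ENNReal.ofReal_mul (by norm_num)]
            norm_num
    · intro x
      obtain ⟨U, hU, hx⟩ := hcov x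
      refine ⟨_, Set.mem_image_of_mem _ hU, ?_⟩
      intro y hy
      exact Metric.mem_thickening_iff.2 ⟨x, hx, hy⟩
    · intro x
      refine ((hfin x).image (Metric.thickening s)).subset ?_
      rintro V ⟨⟨U, hU, rfl⟩, hball⟩
      have hx : x ∈ Metric.thickening s U := hball (Metric.mem_ball_self hr)
      obtain ⟨z, hz, hdz⟩ := Metric.mem_thickening_iff.1 hx
      exact ⟨U, ⟨hU, ⟨z, Metric.mem_ball'.2 (by linarith), hz⟩⟩, rfl⟩
  tfae_have 2 → 3 := by
    intro h 𝒰 hcov ⟨M, hM, hbd⟩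
    obtain ⟨𝒲, hWcov, ⟨N, hN, hWbd⟩, hLeb, hfin⟩ := h 1 one_pos (M + 3) (by positivity)
    set f : Set X → Set X := fun W => {y | Metric.ball y 1 ⊆ W} with hf
    refine ⟨insert ∅ (f '' 𝒲), ?_, ⟨N, hN, ?_⟩, ?_, ?_⟩
    · intro x
      obtain ⟨W, hW, hsub⟩ := hLeb x
      refine ⟨f W, Set.mem_insert_of_mem _ (Set.mem_image_of_mem _ hW), ?_⟩
      exact (Metric.ball_subset_ball (by linarith)).trans hsub
    · rintro V (rfl | ⟨W, hW, rfl⟩)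
      · exact EMetric.diam_empty.le.trans zero_le
      · refine (EMetric.diam_mono ?_).trans (hWbd W hW)
        intro y hy
        exact hy (Metric.mem_ball_self one_pos)
    · intro x
      refine ((hfin x).image f).subset ?_
      rintro V ⟨(rfl | ⟨W, hW, rfl⟩), hx⟩
      · exact absurd hx (Set.notMem_empty x)
      · exact ⟨W, ⟨hW, hx⟩, rfl⟩
    · intro U hU
      rcases Set.eq_empty_or_nonempty U with rfl | ⟨x₀, hx₀⟩
      · exact ⟨∅, Set.mem_insert _ _, Set.empty_subset _⟩
      obtain ⟨W, hW, hsub⟩ := hLeb x₀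
      refine ⟨f W, Set.mem_insert_of_mem _ (Set.mem_image_of_mem _ hW), ?_⟩
      intro y hy z hz
      have hd : dist y x₀ ≤ M :=
        (edist_le_ofReal hM.le).1 ((EMetric.edist_le_diam_of_mem hy hx₀).trans (hbd U hU))
      apply hsub
      have : dist z x₀ ≤ dist z y + dist y x₀ := dist_triangle _ _ _
      rw [Metric.mem_ball] at hz ⊢
      linarith
  tfae_have 3 → 1 := by
    intro h r hr
    obtain ⟨𝒱, hVcov, ⟨N, hN, hVbd⟩, hpf, href⟩ :=
      h (Set.range fun z : X => Metric.ball z r)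
        (fun x => ⟨Metric.ball x r, Set.mem_range_self x, Metric.mem_ball_self hr⟩)
        ⟨2 * r, by positivity, by
          rintro U ⟨z, rfl⟩
          refine EMetric.diam_le ?_
          intro a ha b hb
          calc edist a b ≤ edist a z + edist z b := edist_triangle _ _ _
            _ ≤ ENNReal.ofReal r + ENNReal.ofReal r := by
                refine add_le_add ((edist_le_ofReal hr.le).2 ?_) ((edist_le_ofReal hr.le).2 ?_)
                · exact (Metric.mem_ball.1 ha).le
                · exact (Metric.mem_ball'.1 hb).le
            _ = ENNReal.ofReal (2 * r) := by
                rw [two_mul, ENNReal.ofReal_add hr.le hr.le]⟩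
    set g : Set X → Set X := fun V => {y | Metric.ball y r ⊆ V} with hg
    refine ⟨g '' 𝒱, ?_, ⟨N, hN, ?_⟩, ?_⟩
    · intro x
      obtain ⟨V, hV, hsub⟩ := href (Metric.ball x r) (Set.mem_range_self x)
      exact ⟨g V, Set.mem_image_of_mem _ hV, hsub⟩
    · rintro W ⟨V, hV, rfl⟩
      refine (EMetric.diam_mono ?_).trans (hVbd V hV)
      intro y hy
      exact hy (Metric.mem_ball_self hr)
    · intro x
      refine ((hpf x).image g).subset ?_
      rintro W ⟨⟨V, hV, rfl⟩, y, hy, hyg⟩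
      exact ⟨V, ⟨hV, hyg (Metric.mem_ball'.2 (Metric.mem_ball.1 hy))⟩, rfl⟩
  tfae_finish
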